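/- Let ψ : ℝ → ℝ be 2π-periodic and twice continuously differentiable, let c ∈ ℝ and x₀ ∈ ℝ, and let s be the 2π-periodic sawtooth function with s(x) = (π − x)/2 for x ∈ (0, 2π). Define v := ψ + c·s(· − x₀), a piecewise smooth 2π-periodic function whose only jump (modulo 2π) is at x₀ with jump amplitude [v](x₀) := v(x₀+) − v(x₀−) = cπ. Let v̂_k := (1/2π)∫_0^{2π} v(y) e^{−iky} dy and define the first-order concentration kernel value K_N v(x) := (π/N) Σ_{0<|k|≤N} i k v̂_k e^{ikx}. Then, as N → ∞: (i) K_N v(x₀) → [v](x₀) = cπ, and (ii) for every x with x − x₀ ∉ 2πℤ, K_N v(x) → 0. -/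

import Mathlib

open MeasureTheory intervalIntegral Filter

/-- The `2π`-periodic sawtooth function with `s(x) = (π − x)/2` on `(0, 2π)`. -/
noncomputable def sawtooth (x : ℝ) : ℝ :=
  (Real.pi - (2 * Real.pi) * Int.fract (x / (2 * Real.pi))) / 2

/-- The `k`-th Fourier coefficient `v̂_k = (1/2π)∫_0^{2π} v(y)e^{−iky} dy` of a
real-valued function. -/
noncomputable def fourierCoefR (v : ℝ → ℝ) (k : ℤ) : ℂ :=
  (1 / (2 * Real.pi)) *
    ∫ y in (0 : ℝ)..(2 * Real.pi), (v y : ℂ) * Complex.exp (-Complex.I * k * y)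

namespace ConcAux

lemma norm_exp_of_re_zero {z : ℂ} (h : z.re = 0) : ‖Complex.exp z‖ = 1 := by
  rw [Complex.norm_exp, h, Real.exp_zero]

lemma norm_exp_I_int (k : ℤ) (x : ℝ) : ‖Complex.exp (Complex.I * k * x)‖ = 1 :=
  norm_exp_of_re_zero (by simp [Complex.mul_re])

lemma norm_exp_neg_I_int (k : ℤ) (x : ℝ) : ‖Complex.exp (-Complex.I * k * x)‖ = 1 :=
  norm_exp_of_re_zero (by simp [Complex.mul_re])

lemma sawtooth_periodic : Function.Periodic sawtooth (2 * Real.pi) := by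
  intro x
  unfold sawtooth
  have hπ := Real.pi_pos
  have h : (x + 2 * Real.pi) / (2 * Real.pi) = x / (2 * Real.pi) + 1 := by
    field_simp
  rw [h, Int.fract_add_one]

lemma sawtooth_abs_le (x : ℝ) : |sawtooth x| ≤ Real.pi / 2 := by
  have h0 := Int.fract_nonneg (x / (2 * Real.pi))
  have h1 := Int.fract_lt_one (x / (2 * Real.pi))
  have hπ := Real.pi_pos
  unfold sawtooth
  rw [abs_le]
  constructor <;> nlinarith

lemma sawtooth_measurable : Measurable sawtooth := by
  unfold sawtooth
  exact (measurable_const.sub (measurable_const.mul ((measurable_id.div_const _).fract))).div_const _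

lemma periodic_deriv (f : ℝ → ℝ) {T : ℝ} (hper : Function.Periodic f T) :
    Function.Periodic (deriv f) T := by
  intro x
  have h : (fun y => f (y + T)) = f := funext hper
  calc deriv f (x + T) = deriv (fun y => f (y + T)) x := (deriv_comp_add_const f T x).symm
  _ = deriv f x := by rw [h]


lemma exp_neg_I_int_two_pi (k : ℤ) :
    Complex.exp ((-Complex.I * k) * ((2 * Real.pi : ℝ) : ℂ)) = 1 := by
  have h : ((-Complex.I * k) * ((2 * Real.pi : ℝ) : ℂ)) = ((-k : ℤ) : ℂ) * (2 * Real.pi * Complex.I) := by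
    push_cast; ring
  rw [h, Complex.exp_int_mul_two_pi_mul_I]

lemma hasDerivAt_cexp (c : ℂ) (y : ℝ) :
    HasDerivAt (fun t : ℝ => Complex.exp (c * t)) (c * Complex.exp (c * y)) y := by
  have h1 : HasDerivAt (fun t : ℝ => c * (t : ℂ)) c y := by
    simpa using ((hasDerivAt_id (y : ℂ)).const_mul c).comp_ofReal
  have h2 := (Complex.hasDerivAt_exp (c * y)).comp y h1
  exact h2.congr_deriv (mul_comm _ _)

lemma continuous_cexp (c : ℂ) : Continuous fun y : ℝ => Complex.exp (c * y) := by
  continuity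

/-- Integration by parts against `exp (c y)`. -/
lemma integral_mul_exp_parts (u : ℝ → ℂ) (u' : ℝ → ℂ)
    (hu : ∀ y : ℝ, HasDerivAt u (u' y) y) (hu' : Continuous u') (c : ℂ) :
    ∫ y in (0:ℝ)..(2 * Real.pi), u' y * Complex.exp (c * y)
      = u (2 * Real.pi) * Complex.exp (c * ((2 * Real.pi : ℝ) : ℂ)) - u 0
        - c * ∫ y in (0:ℝ)..(2 * Real.pi), u y * Complex.exp (c * y) := by
  have contu : Continuous u := continuous_iff_continuousAt.2 fun y => (hu y).continuousAt
  have key := intervalIntegral.integral_deriv_mul_eq_sub (a := 0) (b := 2 * Real.pi)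
    (u := u) (v := fun t : ℝ => Complex.exp (c * t))
    (u' := u') (v' := fun t => c * Complex.exp (c * t))
    (fun y _ => hu y) (fun y _ => hasDerivAt_cexp c y)
    (hu'.intervalIntegrable _ _)
    ((continuous_const.mul (continuous_cexp c)).intervalIntegrable _ _)
  have hsplit :
      (∫ y in (0:ℝ)..(2 * Real.pi), (u' y * Complex.exp (c * y) + u y * (c * Complex.exp (c * y))))
        = (∫ y in (0:ℝ)..(2 * Real.pi), u' y * Complex.exp (c * y))
          + ∫ y in (0:ℝ)..(2 * Real.pi), u y * (c * Complex.exp (c * y)) :=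
    intervalIntegral.integral_add ((hu'.mul (continuous_cexp c)).intervalIntegrable _ _)
      ((contu.mul (continuous_const.mul (continuous_cexp c))).intervalIntegrable _ _)
  have h2 : (∫ y in (0:ℝ)..(2 * Real.pi), u y * (c * Complex.exp (c * y)))
      = c * ∫ y in (0:ℝ)..(2 * Real.pi), u y * Complex.exp (c * y) := by
    rw [← intervalIntegral.integral_const_mul]
    congr 1; ext y; ring
  rw [hsplit, h2] at key
  simp only [Complex.ofReal_zero, mul_zero, Complex.exp_zero, mul_one] at key
  linear_combination key

lemma fourierCoefR_deriv (f : ℝ → ℝ) (hper : Function.Periodic f (2 * Real.pi))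
    (hf : ContDiff ℝ 1 f) (k : ℤ) :
    fourierCoefR (deriv f) k = Complex.I * k * fourierCoefR f k := by
  have key : (∫ y in (0:ℝ)..(2 * Real.pi), ((deriv f y : ℝ) : ℂ) * Complex.exp (-Complex.I * k * y))
      = (f (2 * Real.pi) : ℂ) * Complex.exp ((-Complex.I * k) * ((2 * Real.pi : ℝ) : ℂ)) - (f 0 : ℂ)
        - (-Complex.I * k) * ∫ y in (0:ℝ)..(2 * Real.pi), (f y : ℂ) * Complex.exp (-Complex.I * k * y) := by
    have h := integral_mul_exp_parts (fun t => (f t : ℂ)) (fun t => ((deriv f t : ℝ) : ℂ))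
      (fun y => ((hf.differentiable one_ne_zero y).hasDerivAt).ofReal_comp)
      (Complex.continuous_ofReal.comp (hf.continuous_deriv le_rfl)) (-Complex.I * k)
    simpa [mul_assoc] using h
  unfold fourierCoefR
  rw [key, exp_neg_I_int_two_pi k]
  have hf2 : (f (2 * Real.pi) : ℂ) = (f 0 : ℂ) := by
    have h := hper 0
    rw [zero_add] at h
    exact_mod_cast h
  rw [hf2]
  ring

lemma neg_I_int_ne_zero {k : ℤ} (hk : k ≠ 0) : (-Complex.I * k : ℂ) ≠ 0 :=
  mul_ne_zero (neg_ne_zero.2 Complex.I_ne_zero) (Int.cast_ne_zero.2 hk)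

lemma integral_exp_eq_zero (k : ℤ) (hk : k ≠ 0) :
    (∫ y in (0:ℝ)..(2 * Real.pi), Complex.exp (-Complex.I * k * y)) = 0 := by
  have hc := neg_I_int_ne_zero hk
  rw [integral_exp_mul_complex (a := 0) (b := 2 * Real.pi) hc, exp_neg_I_int_two_pi k]
  norm_num

lemma integral_id_mul_exp (k : ℤ) (hk : k ≠ 0) :
    (∫ y in (0:ℝ)..(2 * Real.pi), (y : ℂ) * Complex.exp (-Complex.I * k * y))
      = 2 * (Real.pi : ℂ) / (-Complex.I * k) := by
  have hc := neg_I_int_ne_zero hk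
  have h := integral_mul_exp_parts (fun t : ℝ => (t : ℂ)) (fun _ => 1)
    (fun y => (hasDerivAt_id y).ofReal_comp) continuous_const (-Complex.I * k)
  simp only [one_mul] at h
  rw [integral_exp_eq_zero k hk, exp_neg_I_int_two_pi k] at h
  rw [eq_div_iff hc]
  push_cast at h ⊢
  linear_combination h

lemma sawtooth_integrand_periodic (k : ℤ) :
    Function.Periodic (fun y : ℝ => (sawtooth y : ℂ) * Complex.exp (-Complex.I * k * y))
      (2 * Real.pi) := by
  intro y
  simp only
  rw [sawtooth_periodic y]
  congr 1
  rw [show (-Complex.I * k * ((y + 2 * Real.pi : ℝ) : ℂ))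
      = -Complex.I * k * y + (-Complex.I * k) * ((2 * Real.pi : ℝ) : ℂ) by push_cast; ring,
    Complex.exp_add, exp_neg_I_int_two_pi, mul_one]

lemma fourierCoefR_sawtooth (x₀ : ℝ) (k : ℤ) (hk : k ≠ 0) :
    fourierCoefR (fun y => sawtooth (y - x₀)) k
      = Complex.exp (-Complex.I * k * x₀) * (1 / (2 * Complex.I * k)) := by
  have hπ := Real.pi_pos
  have hc := neg_I_int_ne_zero hk
  set g : ℝ → ℂ := fun y : ℝ => (sawtooth y : ℂ) * Complex.exp (-Complex.I * k * y) with hg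
  have step1 : ∀ y : ℝ, (sawtooth (y - x₀) : ℂ) * Complex.exp (-Complex.I * k * y)
      = g (y - x₀) * Complex.exp (-Complex.I * k * x₀) := by
    intro y
    have hexp : Complex.exp (-Complex.I * k * y)
        = Complex.exp (-Complex.I * k * ((y - x₀ : ℝ) : ℂ)) * Complex.exp (-Complex.I * k * ((x₀ : ℝ) : ℂ)) := by
      rw [← Complex.exp_add]; congr 1; push_cast; ring
    rw [hg]; simp only
    rw [hexp]; ring
  have step2 : (∫ y in (0:ℝ)..(2 * Real.pi), (sawtooth (y - x₀) : ℂ) * Complex.exp (-Complex.I * k * y))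
      = (∫ y in (0:ℝ)..(2 * Real.pi), g (y - x₀)) * Complex.exp (-Complex.I * k * x₀) := by
    rw [← intervalIntegral.integral_mul_const]
    exact intervalIntegral.integral_congr fun y _ => step1 y
  have step3 : (∫ y in (0:ℝ)..(2 * Real.pi), g (y - x₀)) = ∫ y in (0:ℝ)..(2 * Real.pi), g y := by
    rw [intervalIntegral.integral_comp_sub_right g x₀]
    have h := (sawtooth_integrand_periodic k).intervalIntegral_add_eq (0 - x₀) 0
    rw [show (0 - x₀ + 2 * Real.pi : ℝ) = 2 * Real.pi - x₀ by ring, zero_add] at h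
    exact h
  have step4 : (∫ y in (0:ℝ)..(2 * Real.pi), g y)
      = ∫ y in (0:ℝ)..(2 * Real.pi), (((Real.pi - y) / 2 : ℝ) : ℂ) * Complex.exp (-Complex.I * k * y) := by
    apply intervalIntegral.integral_congr_ae
    have hae : ∀ᵐ y : ℝ, y ≠ 2 * Real.pi := by
      rw [ae_iff]
      simpa using measure_singleton (2 * Real.pi)
    filter_upwards [hae] with y hy hymem
    rw [Set.uIoc_of_le (by positivity)] at hymem
    have h1 : 0 < y := hymem.1
    have h2 : y < 2 * Real.pi := lt_of_le_of_ne hymem.2 hy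
    rw [hg]; simp only
    congr 2
    unfold sawtooth
    rw [Int.fract_eq_self.2 ⟨by positivity, by rw [div_lt_one (by positivity)]; exact h2⟩]
    field_simp
  have step5 : (∫ y in (0:ℝ)..(2 * Real.pi), (((Real.pi - y) / 2 : ℝ) : ℂ) * Complex.exp (-Complex.I * k * y))
      = -(Real.pi : ℂ) / (-Complex.I * k) := by
    have hsplit : ∀ y : ℝ, (((Real.pi - y) / 2 : ℝ) : ℂ) * Complex.exp (-Complex.I * k * y)
        = ((Real.pi : ℂ) / 2) * Complex.exp (-Complex.I * k * y)
          - (1 / 2 : ℂ) * ((y : ℂ) * Complex.exp (-Complex.I * k * y)) := by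
      intro y; push_cast; ring
    rw [intervalIntegral.integral_congr fun y _ => hsplit y]
    rw [intervalIntegral.integral_sub, intervalIntegral.integral_const_mul,
      intervalIntegral.integral_const_mul, integral_exp_eq_zero k hk, integral_id_mul_exp k hk]
    · field_simp
      ring
    · exact (continuous_const.mul (continuous_cexp (-Complex.I * k))).intervalIntegrable _ _
    · exact (continuous_const.mul (Complex.continuous_ofReal.mul
        (continuous_cexp (-Complex.I * k)))).intervalIntegrable _ _
  unfold fourierCoefR
  rw [step2, step3, step4, step5]
  have hI := Complex.I_ne_zero
  have hk' : (k : ℂ) ≠ 0 := Int.cast_ne_zero.2 hk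
  have hπ' : (Real.pi : ℂ) ≠ 0 := Complex.ofReal_ne_zero.2 (ne_of_gt hπ)
  field_simp

lemma fourierCoefR_norm_le (g : ℝ → ℝ) {C : ℝ}
    (hC : ∀ y ∈ Set.uIoc (0 : ℝ) (2 * Real.pi), |g y| ≤ C) (k : ℤ) :
    ‖fourierCoefR g k‖ ≤ C := by
  have hπ := Real.pi_pos
  unfold fourierCoefR
  rw [norm_mul]
  have h1 : ‖(1 / (2 * Real.pi) : ℂ)‖ = 1 / (2 * Real.pi) := by
    rw [show (1 / (2 * Real.pi) : ℂ) = ((1 / (2 * Real.pi) : ℝ) : ℂ) by push_cast; ring]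
    rw [Complex.norm_real, Real.norm_eq_abs, abs_of_pos (by positivity)]
  have h2 : ‖∫ y in (0:ℝ)..(2 * Real.pi), (g y : ℂ) * Complex.exp (-Complex.I * k * y)‖
      ≤ C * |2 * Real.pi - 0| := by
    apply intervalIntegral.norm_integral_le_of_norm_le_const
    intro y hy
    rw [norm_mul, norm_exp_neg_I_int, mul_one, Complex.norm_real]
    exact hC y hy
  rw [h1]
  calc 1 / (2 * Real.pi) * ‖∫ y in (0:ℝ)..(2 * Real.pi), (g y : ℂ) * Complex.exp (-Complex.I * k * y)‖
      ≤ 1 / (2 * Real.pi) * (C * |2 * Real.pi - 0|) := by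
        apply mul_le_mul_of_nonneg_left h2 (by positivity)
  _ = C := by
        rw [abs_of_pos (by linarith)]
        field_simp
        ring

lemma sum_Icc_int (g : ℤ → ℂ) (N : ℕ) :
    ∑ k ∈ Finset.Icc (-(N : ℤ)) (N : ℤ), g k
      = g 0 + ∑ j ∈ Finset.range N, (g ((j : ℤ) + 1) + g (-((j : ℤ) + 1))) := by
  induction N with
  | zero => simp
  | succ n ih =>
    have hcast : ((n + 1 : ℕ) : ℤ) = (n : ℤ) + 1 := by push_cast; ring
    have h : Finset.Icc (-((n : ℤ) + 1)) ((n : ℤ) + 1)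
        = insert ((n : ℤ) + 1) (insert (-((n : ℤ) + 1)) (Finset.Icc (-(n : ℤ)) (n : ℤ))) := by
      ext m
      simp only [Finset.mem_Icc, Finset.mem_insert]
      omega
    rw [hcast, h, Finset.sum_insert, Finset.sum_insert, ih, Finset.sum_range_succ]
    · ring
    · simp only [Finset.mem_Icc]; omega
    · simp only [Finset.mem_insert, Finset.mem_Icc]; omega

lemma sum_inv_le_sqrt (N : ℕ) :
    ∑ j ∈ Finset.range N, (1 : ℝ) / (j + 1) ≤ 2 * Real.sqrt N := by
  induction N with
  | zero => simp
  | succ n ih =>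
    rw [Finset.sum_range_succ]
    have h1 : Real.sqrt n ≤ Real.sqrt (n + 1) := Real.sqrt_le_sqrt (by push_cast; linarith)
    have h2 : Real.sqrt ((n : ℝ) + 1) ^ 2 = (n : ℝ) + 1 := Real.sq_sqrt (by positivity)
    have h3 : Real.sqrt (n : ℝ) ^ 2 = (n : ℝ) := Real.sq_sqrt (by positivity)
    have h4 : (0 : ℝ) ≤ Real.sqrt (n : ℝ) := Real.sqrt_nonneg _
    have h5 : (0 : ℝ) < Real.sqrt ((n : ℝ) + 1) := Real.sqrt_pos.2 (by positivity)
    have key : 1 / ((n : ℝ) + 1) ≤ 2 * (Real.sqrt ((n : ℝ) + 1) - Real.sqrt (n : ℝ)) := by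
      rw [div_le_iff₀ (by positivity)]
      nlinarith [sq_nonneg (Real.sqrt ((n : ℝ) + 1) - 1), sq_nonneg (Real.sqrt ((n:ℝ)+1) - Real.sqrt (n:ℝ))]
    push_cast
    push_cast at ih
    linarith

lemma geom_bound {w : ℂ} (hw : ‖w‖ = 1) (h1 : w ≠ 1) (N : ℕ) :
    ‖∑ j ∈ Finset.range N, w ^ (j + 1)‖ ≤ 2 / ‖w - 1‖ := by
  have hpos : 0 < ‖w - 1‖ := by
    rw [norm_pos_iff]
    exact sub_ne_zero.2 h1
  have hsum : ∑ j ∈ Finset.range N, w ^ (j + 1) = (w ^ N - 1) / (w - 1) * w := by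
    simp only [pow_succ']
    rw [← Finset.mul_sum, geom_sum_eq h1]
    ring
  rw [hsum, norm_mul, hw, mul_one, norm_div]
  have h2 : ‖w ^ N - 1‖ ≤ 2 := by
    calc ‖w ^ N - 1‖ ≤ ‖w ^ N‖ + ‖(1 : ℂ)‖ := norm_sub_le _ _
    _ = 2 := by rw [norm_pow, hw]; norm_num
  exact div_le_div₀ (by norm_num) h2 hpos le_rfl

lemma tendsto_sqrt_div : Tendsto (fun N : ℕ => Real.sqrt N / N) atTop (nhds 0) := by
  have hs : Tendsto (fun N : ℕ => Real.sqrt N) atTop atTop := by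
    have h := (tendsto_rpow_atTop (by norm_num : (0:ℝ) < 1/2)).comp
      (tendsto_natCast_atTop_atTop (R := ℝ))
    exact h.congr fun N => (Real.sqrt_eq_rpow _).symm
  have hinv : Tendsto (fun N : ℕ => (Real.sqrt N)⁻¹) atTop (nhds 0) := hs.inv_tendsto_atTop
  apply hinv.congr'
  filter_upwards [eventually_ge_atTop 1] with N hN
  have hN0 : (0 : ℝ) < N := by exact_mod_cast hN
  have hs0 : Real.sqrt N ≠ 0 := ne_of_gt (Real.sqrt_pos.2 hN0)
  field_simp
  rw [Real.sq_sqrt hN0.le]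

end ConcAux

open ConcAux

/-- The first-order (Fejér-type, `η ≡ 1`) concentration kernel
`K_N v(x) = (π/N) Σ_{0<|k|≤N} i k v̂_k e^{ikx}` (the `k = 0` term vanishes). -/
noncomputable def concKernel (N : ℕ) (v : ℝ → ℝ) (x : ℝ) : ℂ :=
  ((Real.pi : ℂ) / N) *
    ∑ k ∈ Finset.Icc (-(N : ℤ)) (N : ℤ),
      Complex.I * k * fourierCoefR v k * Complex.exp (Complex.I * k * x)

/-- Concentration property of the first-order kernel for a piecewise smooth function
`v = ψ + c·s(· − x₀)` with `ψ` a `2π`-periodic `C²` function and `s` the sawtooth: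
(i) at the jump point, `K_N v(x₀) → [v](x₀) = cπ`;
(ii) away from the jump (mod `2π`), `K_N v(x) → 0`. -/
theorem concentration_kernel_detects_edges
    (ψ : ℝ → ℝ) (hψper : Function.Periodic ψ (2 * Real.pi)) (hψ : ContDiff ℝ 2 ψ)
    (c x₀ : ℝ) (v : ℝ → ℝ)
    (hv : ∀ x : ℝ, v x = ψ x + c * sawtooth (x - x₀)) :
    Tendsto (fun N : ℕ => concKernel N v x₀) atTop (nhds ((c * Real.pi : ℝ) : ℂ)) ∧
    ∀ x : ℝ, (∀ m : ℤ, x - x₀ ≠ 2 * Real.pi * m) →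
      Tendsto (fun N : ℕ => concKernel N v x) atTop (nhds 0) := by
  have hπ := Real.pi_pos
  -- smoothness
  have hψ1 : ContDiff ℝ 1 ψ := hψ.of_le (by norm_num)
  have hψd1 : ContDiff ℝ 1 (deriv ψ) := by
    rw [show (2 : WithTop ℕ∞) = 1 + 1 by norm_num] at hψ
    exact (contDiff_succ_iff_deriv.1 hψ).2.2
  have hdψper : Function.Periodic (deriv ψ) (2 * Real.pi) := periodic_deriv ψ hψper
  have contφ : Continuous (deriv (deriv ψ)) := hψd1.continuous_deriv le_rfl
  obtain ⟨C, hC⟩ := (isCompact_Icc (a := (0:ℝ)) (b := 2 * Real.pi)).exists_bound_of_continuousOn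
    contφ.continuousOn
  have hC0 : 0 ≤ C := le_trans (norm_nonneg _) (hC 0 ⟨le_rfl, by positivity⟩)
  -- coefficients of ψ
  set b : ℤ → ℂ := fun k => Complex.I * k * fourierCoefR ψ k with hbdef
  have hb1 : ∀ k : ℤ, b k = fourierCoefR (deriv ψ) k := fun k =>
    (fourierCoefR_deriv ψ hψper hψ1 k).symm
  have hb : ∀ k : ℤ, k ≠ 0 → ‖b k‖ ≤ C / |(k : ℝ)| := by
    intro k hk
    have habs : (0 : ℝ) < |(k : ℝ)| := abs_pos.2 (Int.cast_ne_zero.2 hk)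
    have hnk : ‖((k : ℤ) : ℂ)‖ = |(k : ℝ)| := by
      rw [show ((k : ℤ) : ℂ) = (((k : ℤ) : ℝ) : ℂ) by push_cast; ring,
        Complex.norm_real, Real.norm_eq_abs]
    have hφle : ‖fourierCoefR (deriv (deriv ψ)) k‖ ≤ C := by
      apply fourierCoefR_norm_le
      intro y hy
      rw [Set.uIoc_of_le (by positivity)] at hy
      exact hC y ⟨hy.1.le, hy.2⟩
    have h := fourierCoefR_deriv (deriv ψ) hdψper hψd1 k
    rw [← hb1 k] at h
    rw [le_div_iff₀ habs]
    calc ‖b k‖ * |(k : ℝ)| = ‖fourierCoefR (deriv (deriv ψ)) k‖ := by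
          rw [h]
          simp only [hbdef, norm_mul, Complex.norm_I, one_mul, hnk]
          ring
    _ ≤ C := hφle
  -- linearity of coefficients
  have hlin : ∀ k : ℤ, fourierCoefR v k
      = fourierCoefR ψ k + (c : ℂ) * fourierCoefR (fun y => sawtooth (y - x₀)) k := by
    intro k
    have hint1 : IntervalIntegrable (fun y : ℝ => (ψ y : ℂ) * Complex.exp (-Complex.I * k * y))
        volume 0 (2 * Real.pi) :=
      ((Complex.continuous_ofReal.comp hψ1.continuous).mul
        (continuous_cexp (-Complex.I * k))).intervalIntegrable _ _
    have hmeas : Measurable (fun y : ℝ => ((sawtooth (y - x₀) : ℝ) : ℂ)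
        * Complex.exp (-Complex.I * k * y)) :=
      (Complex.measurable_ofReal.comp (sawtooth_measurable.comp
        (measurable_id.sub measurable_const))).mul (continuous_cexp (-Complex.I * k)).measurable
    have hint2 : IntervalIntegrable (fun y : ℝ => ((sawtooth (y - x₀) : ℝ) : ℂ)
        * Complex.exp (-Complex.I * k * y)) volume 0 (2 * Real.pi) := by
      apply IntervalIntegrable.mono_fun (_root_.intervalIntegrable_const (c := (Real.pi / 2 : ℝ)))
      · exact hmeas.aestronglyMeasurable
      · apply Filter.Eventually.of_forall
        intro y
        simp only [Function.comp]
        rw [norm_mul, norm_exp_neg_I_int, mul_one, Complex.norm_real, Real.norm_eq_abs,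
          Real.norm_eq_abs]
        calc |sawtooth (y - x₀)| ≤ Real.pi / 2 := sawtooth_abs_le _
        _ ≤ |Real.pi / 2| := le_abs_self _
    have hsum : (∫ y in (0:ℝ)..(2 * Real.pi), (v y : ℂ) * Complex.exp (-Complex.I * k * y))
        = (∫ y in (0:ℝ)..(2 * Real.pi), (ψ y : ℂ) * Complex.exp (-Complex.I * k * y))
          + (c : ℂ) * ∫ y in (0:ℝ)..(2 * Real.pi),
              ((sawtooth (y - x₀) : ℝ) : ℂ) * Complex.exp (-Complex.I * k * y) := by
      rw [← intervalIntegral.integral_const_mul,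
        ← intervalIntegral.integral_add hint1 (hint2.const_mul _)]
      apply intervalIntegral.integral_congr
      intro y _
      simp only [hv]
      push_cast
      ring
    unfold fourierCoefR
    rw [hsum]
    ring
  -- term identity
  have hterm : ∀ (k : ℤ), k ≠ 0 → ∀ x : ℝ,
      Complex.I * k * fourierCoefR v k * Complex.exp (Complex.I * k * x)
        = b k * Complex.exp (Complex.I * k * x)
          + ((c : ℂ) / 2) * Complex.exp (Complex.I * k * ((x - x₀ : ℝ) : ℂ)) := by
    intro k hk x
    have hk' : (k : ℂ) ≠ 0 := Int.cast_ne_zero.2 hk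
    have hexp : Complex.exp (-Complex.I * k * ((x₀ : ℝ) : ℂ)) * Complex.exp (Complex.I * k * x)
        = Complex.exp (Complex.I * k * ((x - x₀ : ℝ) : ℂ)) := by
      rw [← Complex.exp_add]; congr 1; push_cast; ring
    rw [hlin k, fourierCoefR_sawtooth x₀ k hk]
    rw [hbdef]
    simp only
    rw [← hexp]
    field_simp
  -- decomposition of the kernel
  have hdecomp : ∀ (N : ℕ) (x : ℝ), concKernel N v x
      = ((Real.pi : ℂ) / N) * ∑ j ∈ Finset.range N,
          (Complex.I * ((j : ℤ) + 1) * fourierCoefR v ((j : ℤ) + 1)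
              * Complex.exp (Complex.I * ((j : ℤ) + 1) * x)
            + Complex.I * (-((j : ℤ) + 1)) * fourierCoefR v (-((j : ℤ) + 1))
              * Complex.exp (Complex.I * (-((j : ℤ) + 1)) * x)) := by
    intro N x
    unfold concKernel
    rw [sum_Icc_int]
    norm_num
  -- abbreviations
  set Tf : ℝ → ℤ → ℂ := fun x k =>
    Complex.I * k * fourierCoefR v k * Complex.exp (Complex.I * k * x) with hTf
  set Bf : ℝ → ℤ → ℂ := fun x k => b k * Complex.exp (Complex.I * k * x) with hBf
  set Gf : ℝ → ℤ → ℂ := fun x k => Complex.exp (Complex.I * k * ((x - x₀ : ℝ) : ℂ)) with hGf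
  have hdecomp2 : ∀ (N : ℕ) (x : ℝ), concKernel N v x
      = ((Real.pi : ℂ) / N) * ∑ j ∈ Finset.range N,
          (Tf x ((j : ℤ) + 1) + Tf x (-((j : ℤ) + 1))) := by
    intro N x
    rw [hdecomp N x]
    congr 1
    apply Finset.sum_congr rfl
    intro j _
    simp only [hTf]
    push_cast
    ring_nf
  have hterm2 : ∀ (k : ℤ), k ≠ 0 → ∀ x : ℝ,
      Tf x k = Bf x k + ((c : ℂ) / 2) * Gf x k := by
    intro k hk x
    simp only [hTf, hBf, hGf]
    exact hterm k hk x
  have hsplit : ∀ (N : ℕ) (x : ℝ), concKernel N v x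
      = ((Real.pi : ℂ) / N) * (∑ j ∈ Finset.range N,
          (Bf x ((j : ℤ) + 1) + Bf x (-((j : ℤ) + 1))))
        + ((Real.pi : ℂ) / N) * (((c : ℂ) / 2) * ∑ j ∈ Finset.range N,
            (Gf x ((j : ℤ) + 1) + Gf x (-((j : ℤ) + 1)))) := by
    intro N x
    rw [hdecomp2 N x]
    have hcongr : ∀ j ∈ Finset.range N, Tf x ((j : ℤ) + 1) + Tf x (-((j : ℤ) + 1))
        = (Bf x ((j : ℤ) + 1) + Bf x (-((j : ℤ) + 1)))
          + ((c : ℂ) / 2) * (Gf x ((j : ℤ) + 1) + Gf x (-((j : ℤ) + 1))) := by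
      intro j _
      rw [hterm2 ((j : ℤ) + 1) (ne_of_gt (by positivity)) x,
        hterm2 (-((j : ℤ) + 1)) (neg_ne_zero.2 (ne_of_gt (by positivity))) x]
      ring
    rw [Finset.sum_congr rfl hcongr, Finset.sum_add_distrib, ← Finset.mul_sum]
    ring
  -- the smooth part tends to zero
  have hnormpi : ∀ N : ℕ, ‖((Real.pi : ℂ) / (N : ℕ))‖ = Real.pi / N := by
    intro N
    rw [show ((Real.pi : ℂ) / (N : ℕ)) = ((Real.pi / (N : ℕ) : ℝ) : ℂ) by push_cast; ring,
      Complex.norm_real, Real.norm_eq_abs, abs_of_nonneg (by positivity)]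
  have hE : ∀ x : ℝ, Tendsto (fun N : ℕ => ((Real.pi : ℂ) / N) * ∑ j ∈ Finset.range N,
      (Bf x ((j : ℤ) + 1) + Bf x (-((j : ℤ) + 1)))) atTop (nhds 0) := by
    intro x
    have hgt : Tendsto (fun N : ℕ => Real.pi / N * (4 * C * Real.sqrt N)) atTop (nhds 0) := by
      have h := tendsto_sqrt_div.const_mul (4 * C * Real.pi)
      rw [mul_zero] at h
      exact h.congr fun N => by ring
    apply squeeze_zero_norm _ hgt
    intro N
    rw [norm_mul, hnormpi N]
    apply mul_le_mul_of_nonneg_left _ (by positivity)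
    have hBnorm : ∀ j ∈ Finset.range N,
        ‖Bf x ((j : ℤ) + 1) + Bf x (-((j : ℤ) + 1))‖ ≤ 2 * C * (1 / ((j : ℝ) + 1)) := by
      intro j _
      have hpos : (0 : ℝ) < (j : ℝ) + 1 := by positivity
      have h1 := hb ((j : ℤ) + 1) (ne_of_gt (by positivity))
      have h2 := hb (-((j : ℤ) + 1)) (neg_ne_zero.2 (ne_of_gt (by positivity)))
      rw [show |(((j : ℤ) + 1 : ℤ) : ℝ)| = (j : ℝ) + 1 by
        push_cast; rw [abs_of_pos hpos]] at h1
      rw [show |((-((j : ℤ) + 1) : ℤ) : ℝ)| = (j : ℝ) + 1 by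
        push_cast; rw [abs_neg, abs_of_pos hpos]] at h2
      have e1 : ‖Bf x ((j : ℤ) + 1)‖ = ‖b ((j : ℤ) + 1)‖ := by
        simp only [hBf]
        rw [norm_mul, norm_exp_I_int, mul_one]
      have e2 : ‖Bf x (-((j : ℤ) + 1))‖ = ‖b (-((j : ℤ) + 1))‖ := by
        simp only [hBf]
        rw [norm_mul, norm_exp_I_int, mul_one]
      calc ‖Bf x ((j : ℤ) + 1) + Bf x (-((j : ℤ) + 1))‖
          ≤ ‖Bf x ((j : ℤ) + 1)‖ + ‖Bf x (-((j : ℤ) + 1))‖ := norm_add_le _ _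
      _ ≤ C / ((j : ℝ) + 1) + C / ((j : ℝ) + 1) := by rw [e1, e2]; exact add_le_add h1 h2
      _ = 2 * C * (1 / ((j : ℝ) + 1)) := by field_simp; ring
    calc ‖∑ j ∈ Finset.range N, (Bf x ((j : ℤ) + 1) + Bf x (-((j : ℤ) + 1)))‖
        ≤ ∑ j ∈ Finset.range N, ‖Bf x ((j : ℤ) + 1) + Bf x (-((j : ℤ) + 1))‖ :=
          norm_sum_le _ _
    _ ≤ ∑ j ∈ Finset.range N, 2 * C * (1 / ((j : ℝ) + 1)) := Finset.sum_le_sum hBnorm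
    _ = 2 * C * ∑ j ∈ Finset.range N, (1 : ℝ) / ((j : ℝ) + 1) := by rw [Finset.mul_sum]
    _ ≤ 2 * C * (2 * Real.sqrt N) :=
          mul_le_mul_of_nonneg_left (sum_inv_le_sqrt N) (by positivity)
    _ = 4 * C * Real.sqrt N := by ring
  constructor
  · -- part (i)
    have heq : ∀ᶠ N : ℕ in atTop, ((Real.pi : ℂ) / N) * (∑ j ∈ Finset.range N,
        (Bf x₀ ((j : ℤ) + 1) + Bf x₀ (-((j : ℤ) + 1)))) + ((c * Real.pi : ℝ) : ℂ)
          = concKernel N v x₀ := by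
      filter_upwards [eventually_ge_atTop 1] with N hN
      rw [hsplit N x₀]
      congr 1
      have hG : ∀ j ∈ Finset.range N, Gf x₀ ((j : ℤ) + 1) + Gf x₀ (-((j : ℤ) + 1)) = 2 := by
        intro j _
        simp only [hGf]
        rw [sub_self]
        norm_num
      rw [Finset.sum_congr rfl hG, Finset.sum_const, Finset.card_range]
      have hN0 : ((N : ℕ) : ℂ) ≠ 0 := Nat.cast_ne_zero.2 (by omega)
      push_cast
      field_simp
      ring
    have hlim := (hE x₀).add (tendsto_const_nhds (x := ((c * Real.pi : ℝ) : ℂ)))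
    rw [zero_add] at hlim
    exact Filter.Tendsto.congr' heq hlim
  · -- part (ii)
    intro x hx
    set z : ℂ := Complex.exp (Complex.I * ((x - x₀ : ℝ) : ℂ)) with hz
    have hznorm : ‖z‖ = 1 := norm_exp_of_re_zero (by simp [Complex.mul_re])
    have hz1 : z ≠ 1 := by
      intro h
      rw [hz, Complex.exp_eq_one_iff] at h
      obtain ⟨n, hn⟩ := h
      apply hx n
      have h2 : Complex.I * ((x - x₀ : ℝ) : ℂ) = Complex.I * ((2 * Real.pi * n : ℝ) : ℂ) := by
        rw [hn]; push_cast; ring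
      have h3 := mul_left_cancel₀ Complex.I_ne_zero h2
      exact_mod_cast h3
    have hzinv1 : z⁻¹ ≠ 1 := fun h => hz1 (inv_eq_one.1 h)
    have hzinvnorm : ‖z⁻¹‖ = 1 := by rw [norm_inv, hznorm, inv_one]
    have hGpow1 : ∀ j : ℕ, Gf x ((j : ℤ) + 1) = z ^ (j + 1) := by
      intro j
      simp only [hGf, hz]
      rw [show Complex.I * (((j : ℤ) + 1 : ℤ) : ℂ) * ((x - x₀ : ℝ) : ℂ)
          = (((j : ℤ) + 1 : ℤ) : ℂ) * (Complex.I * ((x - x₀ : ℝ) : ℂ)) by ring,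
        Complex.exp_int_mul,
        show ((j : ℤ) + 1 : ℤ) = ((j + 1 : ℕ) : ℤ) by push_cast; ring, zpow_natCast]
    have hGpow2 : ∀ j : ℕ, Gf x (-((j : ℤ) + 1)) = (z⁻¹) ^ (j + 1) := by
      intro j
      simp only [hGf, hz]
      rw [show Complex.I * ((-((j : ℤ) + 1) : ℤ) : ℂ) * ((x - x₀ : ℝ) : ℂ)
          = ((-((j : ℤ) + 1) : ℤ) : ℂ) * (Complex.I * ((x - x₀ : ℝ) : ℂ)) by ring,
        Complex.exp_int_mul,
        show (-((j : ℤ) + 1) : ℤ) = -((j + 1 : ℕ) : ℤ) by push_cast; ring,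
        zpow_neg, zpow_natCast, inv_pow]
    set M : ℝ := Real.pi * (|c| / 2) * (2 / ‖z - 1‖ + 2 / ‖z⁻¹ - 1‖) with hM
    have hgeom : Tendsto (fun N : ℕ => ((Real.pi : ℂ) / N) * (((c : ℂ) / 2)
        * ∑ j ∈ Finset.range N, (Gf x ((j : ℤ) + 1) + Gf x (-((j : ℤ) + 1)))))
        atTop (nhds 0) := by
      apply squeeze_zero_norm _ (tendsto_const_div_atTop_nhds_zero_nat M)
      intro N
      have hsumG : ‖∑ j ∈ Finset.range N, (Gf x ((j : ℤ) + 1) + Gf x (-((j : ℤ) + 1)))‖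
          ≤ 2 / ‖z - 1‖ + 2 / ‖z⁻¹ - 1‖ := by
        have e : ∑ j ∈ Finset.range N, (Gf x ((j : ℤ) + 1) + Gf x (-((j : ℤ) + 1)))
            = (∑ j ∈ Finset.range N, z ^ (j + 1)) + ∑ j ∈ Finset.range N, (z⁻¹) ^ (j + 1) := by
          rw [← Finset.sum_add_distrib]
          exact Finset.sum_congr rfl fun j _ => by rw [hGpow1 j, hGpow2 j]
        rw [e]
        exact (norm_add_le _ _).trans
          (add_le_add (geom_bound hznorm hz1 N) (geom_bound hzinvnorm hzinv1 N))
      have hn2 : ‖((c : ℂ) / 2)‖ = |c| / 2 := by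
        rw [show ((c : ℂ) / 2) = ((c / 2 : ℝ) : ℂ) by push_cast; ring,
          Complex.norm_real, Real.norm_eq_abs, abs_div, abs_two]
      rw [norm_mul, norm_mul, hnormpi N, hn2]
      calc Real.pi / N * (|c| / 2
            * ‖∑ j ∈ Finset.range N, (Gf x ((j : ℤ) + 1) + Gf x (-((j : ℤ) + 1)))‖)
          ≤ Real.pi / N * (|c| / 2 * (2 / ‖z - 1‖ + 2 / ‖z⁻¹ - 1‖)) := by
            apply mul_le_mul_of_nonneg_left
              (mul_le_mul_of_nonneg_left hsumG (by positivity)) (by positivity)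
      _ = M / N := by rw [hM]; ring
    have heq2 : (fun N : ℕ => concKernel N v x) = fun N : ℕ =>
        ((Real.pi : ℂ) / N) * (∑ j ∈ Finset.range N,
          (Bf x ((j : ℤ) + 1) + Bf x (-((j : ℤ) + 1))))
        + ((Real.pi : ℂ) / N) * (((c : ℂ) / 2) * ∑ j ∈ Finset.range N,
            (Gf x ((j : ℤ) + 1) + Gf x (-((j : ℤ) + 1)))) := funext fun N => hsplit N x
    rw [heq2]
    have hlim := (hE x).add hgeom
    rw [add_zero] at hlim
    exact hlim
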